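/- Let (M,g) be an oriented Riemannian 4-manifold of constant sectional curvature k, i.e. R_{ijkl} = k(δ_{il}δ_{jk} − δ_{ik}δ_{jl}). Then on the gwistor space SM one has 𝓡α = −k·μ∧α₁, and consequently dφ = 3k·vol − (dμ)² − (k+2)·μ∧α₁. -/
import Mathlib


noncomputable section

/-!
Abstract frame-based model of the gwistor space (G₂-twistor space) of an
oriented Riemannian 4-manifold `(M,g)` (Albuquerque–Salavessa).

`Ω` models the algebra of differential forms on the unit tangent sphere bundle
`SM = {u ∈ TM : ‖u‖ = 1}` equipped with the Sasaki metric, multiplication of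
`Ω` being the wedge product.  `W` models the sections of `TTM` restricted to
`SM`, so that both `T SM = H ⊕ V` (horizontal/vertical splitting) and the
pull-back bundle `π*TM` sit inside `W`.  `e 0, …, e 6` is the coframe dual to
an adapted frame `e₀ = θᵗU, e₁, e₂, e₃, e₄ = θe₁, e₅ = θe₂, e₆ = θe₃`.
-/

structure GwistorSpace (Ω W : Type) [Ring Ω] [Algebra ℝ Ω]
    [AddCommGroup W] [Module ℝ W] where
  /-- the adapted orthonormal coframe `e⁰,…,e⁶` of `SM` -/
  e : Fin 7 → Ω
  /-- exterior derivative -/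
  d : Ω →ₗ[ℝ] Ω
  /-- Hodge star operator of the Sasaki metric -/
  star : Ω →ₗ[ℝ] Ω
  /-- pointwise inner product of forms -/
  ip : Ω → Ω → ℝ
  /-- the Riemannian volume form of `SM` -/
  VolSM : Ω
  /-- the Sasaki metric of `SM` (extended to `TTM|_{SM}`) -/
  g : W → W → ℝ
  /-- the canonical endomorphism `θ` (identifying `H` with the vertical bundle) -/
  theta : W →ₗ[ℝ] W
  /-- the adjoint `θᵗ` of `θ` -/
  thetat : W →ₗ[ℝ] W
  /-- horizontal projection of `T SM = H ⊕ V` -/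
  hor : W →ₗ[ℝ] W
  /-- vertical projection of `T SM = H ⊕ V` -/
  ver : W →ₗ[ℝ] W
  /-- the canonical (outward) vertical unit vector field `U`, `U_u = u` -/
  U : W
  /-- the curvature components `R_{ijkl}` of `M` in the adapted frame -/
  R4 : Fin 4 → Fin 4 → Fin 4 → Fin 4 → ℝ
  /-- interior product `X ⌟ ·` -/
  iota : W → Ω →ₗ[ℝ] Ω
  /-- metric dual `X ↦ X♭` -/
  flat : W →ₗ[ℝ] Ω
  /-- Levi-Civita covariant derivative (of the Sasaki metric) on vector fields -/
  nabla : W → W → W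
  /-- Levi-Civita covariant derivative on forms -/
  D : W → Ω →ₗ[ℝ] Ω
  /-- evaluation of a 3-form on a triple of tangent vectors -/
  ev3 : Ω → W → W → W → ℝ
  /-- coframe 1-forms anticommute -/
  hee : ∀ i j, e i * e j = -(e j * e i)
  /-- the product of the coframe is the volume form of `SM` -/
  hvol : e 0 * e 1 * e 2 * e 3 * e 4 * e 5 * e 6 = VolSM
  /-- the structure equation `dμ = e⁴¹ + e⁵² + e⁶³` -/
  hdmu : d (e 0) = e 4 * e 1 + e 5 * e 2 + e 6 * e 3
  /-- the metric is symmetric -/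
  hgsymm : ∀ a b, g a b = g b a
  /-- `θᵗ` is the adjoint of `θ` -/
  hgtheta : ∀ a b, g (theta a) b = g a (thetat b)
  /-- first Bianchi-type skew symmetry of the curvature of `M` -/
  hRskew : ∀ i j a b, R4 i j a b = - R4 j i a b
  /-- pair symmetry of the curvature of `M` -/
  hRpair : ∀ i j a b, R4 i j a b = R4 a b i j

namespace GwistorSpace

variable {Ω W : Type} [Ring Ω] [Algebra ℝ Ω] [AddCommGroup W] [Module ℝ W]
variable (G : GwistorSpace Ω W)

/-- inclusion of the frame indices of `M` into those of `SM` -/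
def em (i : Fin 4) : Ω := G.e (Fin.castLE (by norm_num) i)

/-- the canonical 1-form `μ = e⁰`, `μ(X) = ⟨U, θX⟩` -/
def μ : Ω := G.e 0

/-- the vertical volume form `α = e⁴⁵⁶` -/
def α : Ω := G.e 4 * G.e 5 * G.e 6

/-- `α₁ = e¹⁵⁶ + e²⁶⁴ + e³⁴⁵` -/
def α₁ : Ω := G.e 1 * G.e 5 * G.e 6 + G.e 2 * G.e 6 * G.e 4 + G.e 3 * G.e 4 * G.e 5

/-- `α₂ = e¹²⁶ + e²³⁴ + e³¹⁵` -/
def α₂ : Ω := G.e 1 * G.e 2 * G.e 6 + G.e 2 * G.e 3 * G.e 4 + G.e 3 * G.e 1 * G.e 5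

/-- `α₃ = e¹²³` -/
def α₃ : Ω := G.e 1 * G.e 2 * G.e 3

/-- `vol = e⁰¹²³ = π* vol_M` -/
def vol : Ω := G.e 0 * G.e 1 * G.e 2 * G.e 3

/-- the 2-form `dμ` -/
def dμ : Ω := G.d (G.e 0)

/-- the fundamental 3-form of the gwistor `G₂` structure:  `φ = α − μ∧dμ − α₂` -/
def φ : Ω := G.α - G.μ * G.dμ - G.α₂

/-- the 4-form `𝓡α = Σ_{i<j} R_{ij01}e^{ij56} + R_{ij02}e^{ij64} + R_{ij03}e^{ij45}` -/
def Rα : Ω := ∑ i : Fin 4, ∑ j : Fin 4,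
  if (i : ℕ) < (j : ℕ) then
    G.R4 i j 0 1 • (G.em i * G.em j * G.e 5 * G.e 6)
    + G.R4 i j 0 2 • (G.em i * G.em j * G.e 6 * G.e 4)
    + G.R4 i j 0 3 • (G.em i * G.em j * G.e 4 * G.e 5)
  else 0

/-- the function `r̄ = r(U,U) = Σ_{j=1}^3 R_{j00j}` -/
def rUU : ℝ := ∑ j ∈ ({1, 2, 3} : Finset (Fin 4)), G.R4 j 0 0 j

/-- the Ricci components of `M` in the adapted frame -/
def RicM (a b : Fin 4) : ℝ := ∑ i : Fin 4, G.R4 i a b i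

/-- the vertical 1-form `ρ = (Ric U)♭ = Σ_{i,k=1}^3 R_{ki0k} e^{i+3}` -/
def ρform : Ω := ∑ i ∈ ({1, 2, 3} : Finset (Fin 4)),
  (∑ k ∈ ({1, 2, 3} : Finset (Fin 4)), G.R4 k i 0 k) •
    G.e (Fin.mk ((i : ℕ) + 3) (by have := i.isLt; omega))

/-- `μ` as a function on tangent vectors, `μ(X) = ⟨U, θX⟩` -/
def μv (X : W) : ℝ := G.g G.U (G.theta X)

/-- the characteristic torsion of the (cocalibrated) gwistor `G₂` structure,
`T^c = *dφ − (1/6)⟨dφ, *φ⟩φ` -/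
def Tc : Ω := G.star (G.d G.φ) - ((1 / 6) * G.ip (G.d G.φ) (G.star G.φ)) • G.φ

/-- `M` has constant sectional curvature `k`:
`R_{ijab} = k (δ_{ib}δ_{ja} − δ_{ia}δ_{jb})` -/
def ConstCurv (k : ℝ) : Prop := ∀ i j a b : Fin 4,
  G.R4 i j a b = k * ((if i = b then (1 : ℝ) else 0) * (if j = a then (1 : ℝ) else 0)
    - (if i = a then (1 : ℝ) else 0) * (if j = b then (1 : ℝ) else 0))

/-- `(M,g)` is Einstein with Einstein constant `lam`:  `r = lam · g` -/
def EinsteinM (lam : ℝ) : Prop := ∀ a b : Fin 4,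
  G.RicM a b = lam * (if a = b then (1 : ℝ) else 0)

end GwistorSpace


set_option maxHeartbeats 1000000 in
open GwistorSpace in
/-- Let `(M,g)` be an oriented Riemannian 4-manifold of
constant sectional curvature `k`, i.e. `R_{ijkl} = k(δ_{il}δ_{jk} − δ_{ik}δ_{jl})`.
Then on the gwistor space `SM` one has `𝓡α = −k·μ∧α₁`, and consequently
`dφ = 3k·vol − (dμ)² − (k+2)·μ∧α₁`. -/
theorem gwistor_Ralpha_and_dphi_of_constant_curvature
    {Ω W : Type} [Ring Ω] [Algebra ℝ Ω] [AddCommGroup W] [Module ℝ W]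
    (G : GwistorSpace Ω W) (k : ℝ)
    (hdφ : G.d G.φ = G.Rα + G.rUU • G.vol - G.dμ * G.dμ - (2 : ℝ) • (G.μ * G.α₁))
    -- `M` has constant sectional curvature `k`
    (hK : G.ConstCurv k) :
    G.Rα = (-k) • (G.μ * G.α₁) ∧
    G.d G.φ = (3 * k) • G.vol - G.dμ * G.dμ - (k + 2) • (G.μ * G.α₁) := by
  have hK' : ∀ i j a b : Fin 4,
      G.R4 i j a b = k * ((if i = b then (1 : ℝ) else 0) * (if j = a then (1 : ℝ) else 0)
        - (if i = a then (1 : ℝ) else 0) * (if j = b then (1 : ℝ) else 0)) := hK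
  have he0 : G.em 0 = G.e 0 := rfl
  have he1 : G.em 1 = G.e 1 := rfl
  have he2 : G.em 2 = G.e 2 := rfl
  have he3 : G.em 3 = G.e 3 := rfl
  have hv : ((3 : Fin 4) : ℕ) = 3 := rfl
  have h1 : G.Rα = (-k) • (G.μ * G.α₁) := by
    simp only [GwistorSpace.Rα, Fin.sum_univ_four]
    norm_num [hK', Fin.ext_iff, he0, he1, he2, he3, hv]
    simp only [GwistorSpace.μ, GwistorSpace.α₁, mul_add, ← mul_assoc, smul_add, neg_add]
  have h2 : G.rUU = 3 * k := by
    unfold GwistorSpace.rUU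
    rw [Finset.sum_insert (by decide), Finset.sum_insert (by decide),
      Finset.sum_singleton]
    norm_num [hK', Fin.ext_iff, hv]
    ring
  refine ⟨h1, ?_⟩
  rw [hdφ, h1, h2]
  module

end
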